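/- arXiv:2010.05053 — 2 statements merged into one kernel-verified Lean document; each statement's English description precedes it below -/
import Mathlib

section
/- Let Q be a polytope and H an affine hyperplane intersecting Q but containing no vertex of Q. Then for every nonempty face F′ of the polytope Q ∩ H there exists a face F of Q meeting H with F ∩ H = F′; namely, if x is a point in the relative interior of F′ and F is the unique face of Q whose relative interior contains x, then F ∩ H = F′. -/
open Set Classical

/-- Points of `ℝ^N`. -/
abbrev Pt (N : ℕ) := EuclideanSpace ℝ (Fin N)

/-- A polytope: the convex hull of a finite set of points. -/
def IsPolytope {N : ℕ} (Q : Set (Pt N)) : Prop :=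
  ∃ S : Set (Pt N), S.Finite ∧ Q = convexHull ℝ S

/-- Dimension of a subset of `ℝ^N`: the dimension of its affine span,
with the empty set having dimension `-1`. -/
noncomputable def faceDim {N : ℕ} (s : Set (Pt N)) : ℤ :=
  if s = ∅ then -1 else (Module.finrank ℝ (affineSpan ℝ s).direction : ℤ)

/-- A face of a polytope: an exposed subset (this includes `∅` and the polytope itself). -/
def IsFaceOf {N : ℕ} (Q F : Set (Pt N)) : Prop :=
  IsExposed ℝ Q F

/-- A `k`-face: a face of dimension `k`. -/
def IsKFaceOf {N : ℕ} (k : ℕ) (Q F : Set (Pt N)) : Prop :=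
  IsFaceOf Q F ∧ faceDim F = k

/-- A vertex: a point spanning a `0`-dimensional face. -/
def IsVertexOf {N : ℕ} (Q : Set (Pt N)) (v : Pt N) : Prop :=
  IsKFaceOf 0 Q {v}

/-- An affine hyperplane: the zero set of a nonconstant affine functional. -/
def IsHyperplane {N : ℕ} (H : Set (Pt N)) : Prop :=
  ∃ f : Pt N →ᵃ[ℝ] ℝ, f.linear ≠ 0 ∧ H = {x | f x = 0}

/-- Characterization of the intrinsic interior via ambient open sets. -/
lemma mem_intrinsicInterior_iff' {N : ℕ} {s : Set (Pt N)} {x : Pt N} :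
    x ∈ intrinsicInterior ℝ s ↔
      x ∈ s ∧ ∃ U : Set (Pt N), IsOpen U ∧ x ∈ U ∧
        U ∩ (affineSpan ℝ s : Set (Pt N)) ⊆ s := by
  constructor
  · intro hx
    obtain ⟨y, hy, rfl⟩ := mem_intrinsicInterior.1 hx
    have hys : (y : Pt N) ∈ s := interior_subset (s := ((↑) ⁻¹' s : Set <| affineSpan ℝ s)) hy
    have hopen : IsOpen (interior ((↑) ⁻¹' s : Set <| affineSpan ℝ s)) := isOpen_interior
    rw [isOpen_induced_iff] at hopen
    obtain ⟨U, hU, hUeq⟩ := hopen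
    refine ⟨hys, U, hU, ?_, ?_⟩
    · have : y ∈ ((↑) ⁻¹' U : Set <| affineSpan ℝ s) := hUeq ▸ hy
      exact this
    · rintro z ⟨hzU, hzA⟩
      have : (⟨z, hzA⟩ : affineSpan ℝ s) ∈ ((↑) ⁻¹' U : Set <| affineSpan ℝ s) := hzU
      rw [hUeq] at this
      exact interior_subset (s := ((↑) ⁻¹' s : Set <| affineSpan ℝ s)) this
  · rintro ⟨hxs, U, hU, hxU, hUs⟩
    have hxA : x ∈ affineSpan ℝ s := subset_affineSpan ℝ s hxs
    refine mem_intrinsicInterior.2 ⟨⟨x, hxA⟩, ?_, rfl⟩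
    refine mem_interior.2 ⟨((↑) ⁻¹' U : Set <| affineSpan ℝ s),
      ?_, hU.preimage continuous_subtype_val, ?_⟩
    · intro z hz
      exact hUs ⟨hz, z.2⟩
    · exact hxU

/-- An extreme subset absorbs any convex subset whose relative interior it meets. -/
lemma isExtreme_absorb {N : ℕ} {P G D : Set (Pt N)} (hG : IsExtreme ℝ P G)
    (hD : D ⊆ P) {x : Pt N} (hxG : x ∈ G) (hxD : x ∈ intrinsicInterior ℝ D) :
    D ⊆ G := by
  intro y hy
  rcases eq_or_ne x y with rfl | hne
  · exact hxG
  obtain ⟨hxDm, U, hU, hxU, hUs⟩ := mem_intrinsicInterior_iff'.1 hxD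
  -- the curve t ↦ y + t • (x - y)
  set c : ℝ → Pt N := fun t => y + t • (x - y) with hc
  have hcont : Continuous c := by continuity
  have hc1 : c 1 = x := by simp [hc]
  have hcA : ∀ t, c t ∈ affineSpan ℝ D := by
    intro t
    have h1 : x -ᵥ y ∈ (affineSpan ℝ D).direction :=
      AffineSubspace.vsub_mem_direction (subset_affineSpan ℝ D hxDm)
        (subset_affineSpan ℝ D hy)
    have h2 : t • (x - y) ∈ (affineSpan ℝ D).direction :=
      Submodule.smul_mem _ t h1
    have := AffineSubspace.vadd_mem_of_mem_direction h2 (subset_affineSpan ℝ D hy)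
    simpa [vadd_eq_add, add_comm] using this
  -- find t > 1 with c t ∈ U
  have hnb : c ⁻¹' U ∈ nhds (1 : ℝ) := by
    have : IsOpen (c ⁻¹' U) := hU.preimage hcont
    exact this.mem_nhds (by simp [hc1, hxU])
  obtain ⟨ε, hε, hball⟩ := Metric.mem_nhds_iff.1 hnb
  set t : ℝ := 1 + ε / 2 with ht
  have htU : c t ∈ U := by
    apply hball
    simp only [Metric.mem_ball, Real.dist_eq, ht]
    rw [add_sub_cancel_left, abs_of_pos (by positivity)]
    linarith
  have htD : c t ∈ D := hUs ⟨htU, hcA t⟩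
  have ht1 : (1 : ℝ) < t := by rw [ht]; linarith
  have ht0 : (0 : ℝ) < t := by linarith
  -- x lies in the open segment from y to c t
  have hseg : x ∈ openSegment ℝ y (c t) := by
    refine ⟨1 - 1 / t, 1 / t, ?_, by positivity, by ring, ?_⟩
    · rw [sub_pos]
      exact (div_lt_one ht0).2 ht1
    · rw [hc, smul_add, smul_smul, one_div, inv_mul_cancel₀ ht0.ne', one_smul]
      module
  exact hG.2 (hD hy) (hD htD) hxG hseg

lemma intrinsicInterior_inter_affineSubspace {N : ℕ} {F : Set (Pt N)}
    {H : AffineSubspace ℝ (Pt N)} {x : Pt N}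
    (hx : x ∈ intrinsicInterior ℝ F) (hxH : x ∈ H) :
    x ∈ intrinsicInterior ℝ (F ∩ (H : Set (Pt N))) := by
  obtain ⟨hxF, U, hU, hxU, hUs⟩ := mem_intrinsicInterior_iff'.1 hx
  refine mem_intrinsicInterior_iff'.2 ⟨⟨hxF, hxH⟩, U, hU, hxU, ?_⟩
  rintro z ⟨hzU, hzA⟩
  have hsub : affineSpan ℝ (F ∩ (H : Set (Pt N))) ≤ H :=
    affineSpan_le.2 inter_subset_right
  have hsub2 : affineSpan ℝ (F ∩ (H : Set (Pt N))) ≤ affineSpan ℝ F :=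
    affineSpan_mono ℝ inter_subset_left
  exact ⟨hUs ⟨hzU, hsub2 hzA⟩, hsub hzA⟩

lemma face_inter_eq {N : ℕ} {Q : Set (Pt N)}
    {H : AffineSubspace ℝ (Pt N)} {F' F : Set (Pt N)}
    (hF' : IsExposed ℝ (Q ∩ (H : Set (Pt N))) F') {x : Pt N}
    (hx : x ∈ intrinsicInterior ℝ F')
    (hF : IsExposed ℝ Q F) (hxF : x ∈ intrinsicInterior ℝ F) :
    F ∩ (H : Set (Pt N)) = F' := by
  have hxF' : x ∈ F' := intrinsicInterior_subset hx
  have hxQH : x ∈ Q ∩ (H : Set (Pt N)) := hF'.subset hxF'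
  have hxFH : x ∈ F ∩ (H : Set (Pt N)) := ⟨intrinsicInterior_subset hxF, hxQH.2⟩
  have hFHext : IsExtreme ℝ (Q ∩ (H : Set (Pt N))) (F ∩ (H : Set (Pt N))) := by
    constructor
    · exact inter_subset_inter_left _ hF.subset
    · rintro x₁ hx₁ x₂ hx₂ z hz hseg
      exact ⟨hF.isExtreme.2 hx₁.1 hx₂.1 hz.1 hseg, hx₁.2⟩
  have hxFHi : x ∈ intrinsicInterior ℝ (F ∩ (H : Set (Pt N))) :=
    intrinsicInterior_inter_affineSubspace hxF hxQH.2
  apply Set.Subset.antisymm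
  · exact isExtreme_absorb hF'.isExtreme (inter_subset_inter_left _ hF.subset) hxF' hxFHi
  · exact isExtreme_absorb hFHext hF'.subset hxFH hx

/-- A linear functional is bounded on a convex hull by its bound on the generators. -/
lemma hull_le_of_forall_le {N : ℕ} {S : Set (Pt N)} {l : Pt N →L[ℝ] ℝ} {M : ℝ}
    (h : ∀ s ∈ S, l s ≤ M) : ∀ y ∈ convexHull ℝ S, l y ≤ M := by
  intro y hy
  have : convexHull ℝ S ⊆ {w | l w ≤ M} :=
    convexHull_min h (convex_halfSpace_le ⟨fun a b => map_add l a b, fun c a => map_smul l c a⟩ M)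
  exact this hy

/-- Equality case: a point of the hull attaining the maximum lies in the hull of
the generators attaining it. -/
lemma mem_hull_attaining {N : ℕ} {S : Finset (Pt N)} {l : Pt N →L[ℝ] ℝ} {M : ℝ}
    (hS : ∀ s ∈ S, l s ≤ M) {y : Pt N} (hy : y ∈ convexHull ℝ (S : Set (Pt N)))
    (hyM : l y = M) : y ∈ convexHull ℝ {s : Pt N | s ∈ S ∧ l s = M} := by
  rw [Finset.convexHull_eq] at hy
  obtain ⟨w, hw0, hw1, hcm⟩ := hy
  have hly : l y = ∑ z ∈ S, w z * l z := by
    rw [← hcm, S.centerMass_eq_of_sum_1 _ hw1, map_sum]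
    simp [smul_eq_mul]
  have hzero : ∑ z ∈ S, w z * (M - l z) = 0 := by
    have : ∑ z ∈ S, w z * (M - l z) = (∑ z ∈ S, w z) * M - ∑ z ∈ S, w z * l z := by
      rw [Finset.sum_mul]
      rw [← Finset.sum_sub_distrib]
      congr 1; ext z; ring
    rw [this, hw1, one_mul, ← hly, hyM, sub_self]
  have hall : ∀ z ∈ S, w z * (M - l z) = 0 :=
    (Finset.sum_eq_zero_iff_of_nonneg fun z hz =>
      mul_nonneg (hw0 z hz) (sub_nonneg.2 (hS z hz))).1 hzero
  have hkey : ∀ z ∈ S, w z ≠ 0 → l z = M := by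
    intro z hz hwz
    have := hall z hz
    rcases mul_eq_zero.1 this with h | h
    · exact absurd h hwz
    · linarith [sub_eq_zero.1 h]
  have hfil : y = (S.filter fun z => w z ≠ 0).centerMass w id := by
    rw [Finset.centerMass_filter_ne_zero, hcm]
  rw [hfil]
  refine Finset.centerMass_mem_convexHull _ (fun i hi => hw0 i (Finset.mem_filter.1 hi).1) ?_ ?_
  · rw [Finset.sum_filter_ne_zero, hw1]; exact one_pos
  · intro i hi
    obtain ⟨hiS, hiw⟩ := Finset.mem_filter.1 hi
    exact ⟨hiS, hkey i hiS hiw⟩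

/-- A supporting functional at a point of a convex set outside its intrinsic interior. -/
lemma exists_supporting {N : ℕ} {Q : Set (Pt N)} (hconv : Convex ℝ Q) {x : Pt N}
    (hxQ : x ∈ Q) (hx : x ∉ intrinsicInterior ℝ Q) :
    ∃ l : Pt N →L[ℝ] ℝ, (∀ y ∈ Q, l y ≤ l x) ∧ ∃ y ∈ Q, l y < l x := by
  set E := affineSpan ℝ Q with hE
  set V := E.direction with hV
  have hxE : x ∈ E := subset_affineSpan ℝ Q hxQ
  set D : Set V := {v : V | (v : Pt N) + x ∈ Q} with hD
  have hconvD : Convex ℝ D := by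
    intro v₁ h₁ v₂ h₂ a b ha hb hab
    show ((a • v₁ + b • v₂ : V) : Pt N) + x ∈ Q
    have : ((a • v₁ + b • v₂ : V) : Pt N) + x
        = a • ((v₁ : Pt N) + x) + b • ((v₂ : Pt N) + x) := by
      push_cast
      rw [smul_add, smul_add, add_add_add_comm, ← add_smul, hab, one_smul]
    rw [this]
    exact hconv h₁ h₂ ha hb hab
  -- 0 is not in the interior of D
  have h0D : (0 : V) ∉ interior D := by
    intro h0
    obtain ⟨t, hts, hto, h0t⟩ := mem_interior.1 h0
    rw [isOpen_induced_iff] at hto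
    obtain ⟨W, hW, hWeq⟩ := hto
    apply hx
    refine mem_intrinsicInterior_iff'.2 ⟨hxQ, (fun y => y - x) ⁻¹' W,
      hW.preimage (continuous_id.sub continuous_const), ?_, ?_⟩
    · show x - x ∈ W
      rw [sub_self]
      have : (0 : V) ∈ ((↑) ⁻¹' W : Set V) := hWeq ▸ h0t
      simpa using this
    · rintro z ⟨hzW, hzA⟩
      have hzV : z - x ∈ V := by
        have := AffineSubspace.vsub_mem_direction (s := E) hzA hxE
        simpa [vsub_eq_sub] using this
      have : (⟨z - x, hzV⟩ : V) ∈ ((↑) ⁻¹' W : Set V) := hzW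
      rw [hWeq] at this
      have hzD : (⟨z - x, hzV⟩ : V) ∈ D := hts this
      simpa [hD, sub_add_cancel] using hzD
  -- interior of D is nonempty
  obtain ⟨w, hw⟩ := Set.Nonempty.intrinsicInterior hconv ⟨x, hxQ⟩
  obtain ⟨hwQ, U, hU, hwU, hUs⟩ := mem_intrinsicInterior_iff'.1 hw
  have hwV : w - x ∈ V := by
    have := AffineSubspace.vsub_mem_direction (s := E) (subset_affineSpan ℝ Q hwQ) hxE
    simpa [vsub_eq_sub] using this
  have hwint : (⟨w - x, hwV⟩ : V) ∈ interior D := by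
    refine mem_interior.2 ⟨(fun v : V => (v : Pt N) + x) ⁻¹' U, ?_,
      hU.preimage ((continuous_subtype_val).add continuous_const), ?_⟩
    · intro v hv
      have hvE : (v : Pt N) + x ∈ E := by
        have := AffineSubspace.vadd_mem_of_mem_direction v.2 hxE
        simpa [vadd_eq_add] using this
      exact hUs ⟨hv, hvE⟩
    · show (w - x) + x ∈ U
      rwa [sub_add_cancel]
  -- separate 0 from interior D
  obtain ⟨f, hf⟩ := geometric_hahn_banach_open_point (hconvD.interior) isOpen_interior h0D
  rw [map_zero] at hf
  -- f ≤ 0 on all of D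
  have hfD : ∀ v ∈ D, f v ≤ 0 := by
    intro v hv
    by_contra hpos
    push_neg at hpos
    set d : V := ⟨w - x, hwV⟩ with hd
    have hfd : f d < 0 := hf d hwint
    set t : ℝ := f v / (2 * (f v - f d)) with htdef
    have hden : 0 < f v - f d := by linarith
    have ht0 : 0 < t := by positivity
    have ht2 : t ≤ 1 / 2 := by
      rw [htdef, div_le_div_iff₀ (by linarith) (by norm_num)]
      nlinarith
    have hmem : t • d + (1 - t) • v ∈ interior D :=
      hconvD.combo_interior_self_mem_interior hwint hv ht0 (by linarith) (by ring)
    have := hf _ hmem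
    rw [map_add, map_smul, map_smul, smul_eq_mul, smul_eq_mul] at this
    have hcalc : t * f d + (1 - t) * f v = f v - t * (f v - f d) := by ring
    rw [hcalc] at this
    have : f v - f v / 2 < 0 := by
      have htv : t * (f v - f d) = f v / 2 := by
        rw [htdef]; field_simp
      linarith [htv ▸ this]
    linarith
  -- extend f to the ambient space via orthogonal projection
  set l : Pt N →L[ℝ] ℝ := f.comp (V.orthogonalProjectionOnto : Pt N →L[ℝ] V) with hl
  have hkey : ∀ v : V, l ((v : Pt N) + x) - l x = f v := by
    intro v
    have : l ((v : Pt N) + x) - l x = l (v : Pt N) := by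
      rw [← map_sub, add_sub_cancel_right]
    rw [this, hl]
    simp only [ContinuousLinearMap.comp_apply]
    rw [Submodule.orthogonalProjectionOnto_mem_subspace_eq_self]
  refine ⟨l, ?_, ?_⟩
  · intro y hy
    have hyV : y - x ∈ V := by
      have := AffineSubspace.vsub_mem_direction (s := E) (subset_affineSpan ℝ Q hy) hxE
      simpa [vsub_eq_sub] using this
    have hyD : (⟨y - x, hyV⟩ : V) ∈ D := by
      show (y - x) + x ∈ Q
      rwa [sub_add_cancel]
    have := hkey ⟨y - x, hyV⟩
    rw [show ((⟨y - x, hyV⟩ : V) : Pt N) + x = y by simp [sub_add_cancel]] at this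
    linarith [hfD _ hyD]
  · refine ⟨w, hwQ, ?_⟩
    have := hkey ⟨w - x, hwV⟩
    rw [show ((⟨w - x, hwV⟩ : V) : Pt N) + x = w by simp [sub_add_cancel]] at this
    have hfd : f ⟨w - x, hwV⟩ < 0 := hf _ hwint
    linarith

/-- For polytopes, an exposed subset of an exposed subset is exposed. -/
lemma isExposed_trans_of_polytope {N : ℕ} {S : Finset (Pt N)} {F₁ F₂ : Set (Pt N)}
    (h1 : IsExposed ℝ (convexHull ℝ (S : Set (Pt N))) F₁) (h2 : IsExposed ℝ F₁ F₂) :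
    IsExposed ℝ (convexHull ℝ (S : Set (Pt N))) F₂ := by
  set Q := convexHull ℝ (S : Set (Pt N)) with hQ
  rintro ⟨p, hp⟩
  have hpF₁ : p ∈ F₁ := h2.subset hp
  obtain ⟨l₁, hF₁⟩ := h1 ⟨p, hpF₁⟩
  obtain ⟨l₂, hF₂⟩ := h2 ⟨p, hp⟩
  set M₁ := l₁ p with hM₁
  set M₂ := l₂ p with hM₂
  have hpQ : p ∈ Q := h1.subset hpF₁
  have hQle : ∀ y ∈ Q, l₁ y ≤ M₁ := fun y hy => (hF₁ ▸ hpF₁).2 y hy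
  have hF₁le : ∀ y ∈ F₁, l₂ y ≤ M₂ := fun y hy => (hF₂ ▸ hp).2 y hy
  have hF₁eq : F₁ = {y ∈ Q | l₁ y = M₁} := by
    rw [hF₁]
    ext y
    simp only [Set.mem_setOf_eq, Set.mem_sep_iff]
    constructor
    · rintro ⟨hyQ, hymax⟩
      exact ⟨hyQ, le_antisymm (hQle y hyQ) (hymax p hpQ)⟩
    · rintro ⟨hyQ, hyeq⟩
      exact ⟨hyQ, fun z hz => hyeq ▸ hQle z hz⟩
  have hF₂eq : F₂ = {y ∈ F₁ | l₂ y = M₂} := by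
    rw [hF₂]
    ext y
    simp only [Set.mem_setOf_eq, Set.mem_sep_iff]
    constructor
    · rintro ⟨hyF, hymax⟩
      exact ⟨hyF, le_antisymm (hF₁le y hyF) (hymax p hpF₁)⟩
    · rintro ⟨hyF, hyeq⟩
      exact ⟨hyF, fun z hz => hyeq ▸ hF₁le z hz⟩
  have hSQ : ∀ s ∈ S, s ∈ Q := fun s hs => subset_convexHull ℝ _ hs
  -- choose δ
  obtain ⟨δ, hδpos, hδ⟩ : ∃ δ : ℝ, 0 < δ ∧ ∀ s ∈ S, l₁ s < M₁ → l₁ s ≤ M₁ - δ := by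
    by_cases hT : (S.filter fun s => l₁ s < M₁).Nonempty
    · refine ⟨M₁ - (S.filter fun s => l₁ s < M₁).sup' hT (fun s => l₁ s), ?_, ?_⟩
      · rw [sub_pos, Finset.sup'_lt_iff]
        exact fun s hs => (Finset.mem_filter.1 hs).2
      · intro s hs hlt
        have : l₁ s ≤ (S.filter fun s => l₁ s < M₁).sup' hT (fun s => l₁ s) :=
          Finset.le_sup' _ (Finset.mem_filter.2 ⟨hs, hlt⟩)
        linarith
    · exact ⟨1, one_pos, fun s hs hlt =>
        absurd ⟨s, Finset.mem_filter.2 ⟨hs, hlt⟩⟩ hT⟩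
  -- choose C
  have hSne : S.Nonempty := by
    rcases Finset.eq_empty_or_nonempty S with rfl | h
    · simp only [Finset.coe_empty, convexHull_empty, hQ] at hpQ
      exact absurd hpQ (Set.notMem_empty p)
    · exact h
  set C : ℝ := max 1 (S.sup' hSne fun s => l₂ s - M₂) with hC
  have hC1 : (1 : ℝ) ≤ C := le_max_left _ _
  have hC0 : (0 : ℝ) < C := lt_of_lt_of_le one_pos hC1
  have hCb : ∀ s ∈ S, l₂ s - M₂ ≤ C := fun s hs =>
    le_trans (Finset.le_sup' (f := fun s => l₂ s - M₂) hs) (le_max_right _ _)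
  set ε : ℝ := δ / (2 * C) with hε
  have hεpos : 0 < ε := by positivity
  have hεC : ε * C = δ / 2 := by
    rw [hε]
    field_simp
  set l : Pt N →L[ℝ] ℝ := l₁ + ε • l₂ with hldef
  have hlapp : ∀ y : Pt N, l y = l₁ y + ε * l₂ y := by
    intro y
    simp [hldef, smul_eq_mul]
  set M : ℝ := M₁ + ε * M₂ with hM
  have hbad : ∀ s ∈ S, l₁ s < M₁ → l s < M := by
    intro s hs hlt
    have h1' := hδ s hs hlt
    have h2' : ε * (l₂ s - M₂) ≤ ε * C :=
      mul_le_mul_of_nonneg_left (hCb s hs) hεpos.le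
    rw [hεC] at h2'
    rw [hlapp, hM]
    nlinarith
  have hlS : ∀ s ∈ (S : Set (Pt N)), l s ≤ M := by
    intro s hs
    rw [Finset.mem_coe] at hs
    by_cases hlt : l₁ s < M₁
    · exact (hbad s hs hlt).le
    · have h1' : l₁ s = M₁ := le_antisymm (hQle s (hSQ s hs)) (not_lt.1 hlt)
      have hsF₁ : s ∈ F₁ := by rw [hF₁eq]; exact ⟨hSQ s hs, h1'⟩
      have := hF₁le s hsF₁
      rw [hlapp, hM]
      nlinarith
  have hlQ : ∀ y ∈ Q, l y ≤ M := hull_le_of_forall_le hlS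
  have hlp : l p = M := by rw [hlapp, hM, hM₁, hM₂]
  have hsubF₂ : {s : Pt N | s ∈ S ∧ l s = M} ⊆ F₂ := by
    rintro s ⟨hsS, hsM⟩
    have h1' : l₁ s = M₁ := by
      by_contra hne
      have hlt : l₁ s < M₁ := lt_of_le_of_ne (hQle s (hSQ s hsS)) hne
      exact absurd hsM (hbad s hsS hlt).ne
    have hsF₁ : s ∈ F₁ := by rw [hF₁eq]; exact ⟨hSQ s hsS, h1'⟩
    have h2' : l₂ s = M₂ := by
      have : ε * l₂ s = ε * M₂ := by
        rw [hlapp] at hsM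
        rw [hM] at hsM
        linarith
      exact mul_left_cancel₀ hεpos.ne' this
    rw [hF₂eq]
    exact ⟨hsF₁, h2'⟩
  have hF₂conv : Convex ℝ F₂ := h2.convex (h1.convex (convex_convexHull ℝ _))
  refine ⟨l, ?_⟩
  ext y
  simp only [Set.mem_setOf_eq, Set.mem_sep_iff]
  constructor
  · intro hyF₂
    have hyF₁ : y ∈ F₁ := h2.subset hyF₂
    have hyQ : y ∈ Q := h1.subset hyF₁
    have h1' : l₁ y = M₁ := (hF₁eq ▸ hyF₁).2
    have h2' : l₂ y = M₂ := (hF₂eq ▸ hyF₂).2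
    have hly : l y = M := by rw [hlapp, h1', h2']
    exact ⟨hyQ, fun z hz => hly ▸ hlQ z hz⟩
  · rintro ⟨hyQ, hymax⟩
    have hly : l y = M := le_antisymm (hlQ y hyQ) (hlp ▸ hymax p hpQ)
    have : y ∈ convexHull ℝ {s : Pt N | s ∈ S ∧ l s = M} :=
      mem_hull_attaining (fun s hs => hlS s (Finset.mem_coe.2 hs)) hyQ hly
    exact convexHull_min hsubF₂ hF₂conv this

/-- Every point of a polytope lies in the intrinsic interior of some exposed face. -/
lemma exists_exposed_face_intrinsicInterior {N : ℕ} :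
    ∀ n : ℕ, ∀ S : Finset (Pt N), ∀ x ∈ convexHull ℝ (S : Set (Pt N)),
      Module.finrank ℝ (affineSpan ℝ (convexHull ℝ (S : Set (Pt N)))).direction ≤ n →
      ∃ F, IsExposed ℝ (convexHull ℝ (S : Set (Pt N))) F ∧ x ∈ intrinsicInterior ℝ F := by
  intro n
  induction n using Nat.strong_induction_on with
  | _ n ih =>
    intro S x hx hdim
    set Q := convexHull ℝ (S : Set (Pt N)) with hQdef
    by_cases hint : x ∈ intrinsicInterior ℝ Q
    · exact ⟨Q, IsExposed.refl _, hint⟩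
    obtain ⟨l, hle, y, hyQ, hylt⟩ := exists_supporting (convex_convexHull ℝ _) hx hint
    set M := l x with hM
    set F₁ := {z ∈ Q | l z = M} with hF₁
    have hexp₁ : IsExposed ℝ Q F₁ := by
      intro _
      refine ⟨l, ?_⟩
      ext z
      simp only [hF₁, Set.mem_sep_iff, Set.mem_setOf_eq]
      constructor
      · rintro ⟨hzQ, hzM⟩
        exact ⟨hzQ, fun w hw => hzM ▸ hle w hw⟩
      · rintro ⟨hzQ, hzmax⟩
        exact ⟨hzQ, le_antisymm (hle z hzQ) (hzmax x hx)⟩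
    have hxF₁ : x ∈ F₁ := ⟨hx, rfl⟩
    set T := S.filter (fun s => l s = M) with hT
    have hTS : {s : Pt N | s ∈ S ∧ l s = M} = (T : Set (Pt N)) := by
      ext s
      simp [hT]
    have hSle : ∀ s ∈ S, l s ≤ M := fun s hs => hle s (subset_convexHull ℝ _ hs)
    have hF₁conv : Convex ℝ F₁ := by
      have heq : F₁ = Q ∩ {z | l z = M} := rfl
      rw [heq]
      exact (convex_convexHull ℝ _).inter
        (convex_hyperplane ⟨fun a b => map_add l a b, fun c a => map_smul l c a⟩ M)
    have hF₁T : F₁ = convexHull ℝ (T : Set (Pt N)) := by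
      apply Set.Subset.antisymm
      · rintro z ⟨hzQ, hzM⟩
        have := mem_hull_attaining hSle hzQ hzM
        rwa [hTS] at this
      · apply convexHull_min _ hF₁conv
        intro s hs
        rw [Finset.mem_coe, hT, Finset.mem_filter] at hs
        exact ⟨subset_convexHull ℝ _ hs.1, hs.2⟩
    -- dimension decreases
    set V := (affineSpan ℝ Q).direction with hV
    set W := V ⊓ LinearMap.ker (l : Pt N →ₗ[ℝ] ℝ) with hW
    have hxE : x ∈ affineSpan ℝ Q := subset_affineSpan ℝ Q hx
    have hdir : (affineSpan ℝ F₁).direction ≤ W := by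
      rw [direction_affineSpan, vectorSpan_def]
      apply Submodule.span_le.2
      rintro v ⟨y₁, hy₁, y₂, hy₂, rfl⟩
      have h₁Q : y₁ ∈ Q := hy₁.1
      have h₂Q : y₂ ∈ Q := hy₂.1
      refine Submodule.mem_inf.2 ⟨?_, ?_⟩
      · exact AffineSubspace.vsub_mem_direction (subset_affineSpan ℝ Q h₁Q)
          (subset_affineSpan ℝ Q h₂Q)
      · rw [LinearMap.mem_ker]
        show l (y₁ -ᵥ y₂) = 0
        rw [vsub_eq_sub, map_sub, hy₁.2, hy₂.2, sub_self]
    have hyxV : y - x ∈ V := by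
      have := AffineSubspace.vsub_mem_direction (subset_affineSpan ℝ Q hyQ) hxE
      simpa [vsub_eq_sub] using this
    have hyxW : y - x ∉ W := by
      intro hmem
      have : l (y - x) = 0 := (Submodule.mem_inf.1 hmem).2
      rw [map_sub] at this
      have : l y = l x := by linarith
      exact absurd this hylt.ne
    have hWV : W < V := by
      refine lt_of_le_of_ne inf_le_left ?_
      intro h
      exact hyxW (h ▸ hyxV)
    have hm : Module.finrank ℝ (affineSpan ℝ F₁).direction < n := by
      have h1 : Module.finrank ℝ (affineSpan ℝ F₁).direction ≤ Module.finrank ℝ W :=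
        Submodule.finrank_mono hdir
      have h2 : Module.finrank ℝ W < Module.finrank ℝ V :=
        Submodule.finrank_lt_finrank_of_lt hWV
      omega
    obtain ⟨F₂, hexp₂, hx₂⟩ := ih (Module.finrank ℝ (affineSpan ℝ F₁).direction) hm T x
      (by rw [← hF₁T]; exact hxF₁) (by rw [← hF₁T])
    rw [← hF₁T] at hexp₂
    exact ⟨F₂, isExposed_trans_of_polytope hexp₁ hexp₂, hx₂⟩

/-- If `H` is a hyperplane meeting the polytope `Q` but no
vertex of `Q`, then every nonempty face `F'` of `Q ∩ H` arises as `F ∩ H` for a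
face `F` of `Q` meeting `H`; namely, for `x` in the relative interior of `F'`,
the unique face of `Q` whose relative interior contains `x` works. -/
theorem face_of_section_lifts {N : ℕ} (Q H : Set (Pt N))
    (hQ : IsPolytope Q) (hH : IsHyperplane H) (hQH : (Q ∩ H).Nonempty)
    (hv : ∀ v : Pt N, IsVertexOf Q v → v ∉ H)
    (F' : Set (Pt N)) (hF' : IsFaceOf (Q ∩ H) F') (hF'ne : F'.Nonempty) :
    (∃ F : Set (Pt N), IsFaceOf Q F ∧ (F ∩ H).Nonempty ∧ F ∩ H = F') ∧
    ∀ x ∈ intrinsicInterior ℝ F', ∀ F : Set (Pt N),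
      IsFaceOf Q F → x ∈ intrinsicInterior ℝ F → F ∩ H = F' := by
  have hQ' : ∃ S : Set (Pt N), S.Finite ∧ Q = convexHull ℝ S := hQ
  obtain ⟨S, hSfin, hQS⟩ := hQ'
  have hH' : ∃ f : Pt N →ᵃ[ℝ] ℝ, f.linear ≠ 0 ∧ H = {x | f x = 0} := hH
  obtain ⟨f, hflin, hHf⟩ := hH'
  have hF'e : IsExposed ℝ (Q ∩ H) F' := hF'
  -- `H` as an affine subspace
  set Hsub : AffineSubspace ℝ (Pt N) :=
    AffineSubspace.comap f (AffineSubspace.mk' (0 : ℝ) ⊥) with hHsub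
  have hHset : H = (Hsub : Set (Pt N)) := by
    ext z
    rw [hHf]
    simp only [Set.mem_setOf_eq, hHsub, AffineSubspace.coe_comap, Set.mem_preimage,
      SetLike.mem_coe, AffineSubspace.mem_mk', Submodule.mem_bot,
      vsub_eq_sub, sub_zero]
  -- part 2
  have part2 : ∀ x ∈ intrinsicInterior ℝ F', ∀ F : Set (Pt N),
      IsFaceOf Q F → x ∈ intrinsicInterior ℝ F → F ∩ H = F' := by
    intro x hx F hF hxF
    have hFe : IsExposed ℝ Q F := hF
    rw [hHset]
    rw [hHset] at hF'e
    exact face_inter_eq hF'e hx hFe hxF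
  refine ⟨?_, part2⟩
  -- part 1
  have hQconv : Convex ℝ Q := hQS ▸ convex_convexHull ℝ S
  have hF'conv : Convex ℝ F' := hF'e.convex (hQconv.inter (hHset ▸ Hsub.convex))
  obtain ⟨x, hx⟩ := Set.Nonempty.intrinsicInterior hF'conv hF'ne
  have hxQH : x ∈ Q ∩ H := hF'e.subset (intrinsicInterior_subset hx)
  have hQS' : Q = convexHull ℝ ((hSfin.toFinset : Finset (Pt N)) : Set (Pt N)) := by
    rw [hSfin.coe_toFinset, hQS]
  obtain ⟨F, hexp, hxi⟩ := exists_exposed_face_intrinsicInterior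
    (Module.finrank ℝ (affineSpan ℝ
      (convexHull ℝ ((hSfin.toFinset : Finset (Pt N)) : Set (Pt N)))).direction)
    hSfin.toFinset x (by rw [← hQS']; exact hxQH.1) le_rfl
  rw [← hQS'] at hexp
  have hexpF : IsFaceOf Q F := hexp
  exact ⟨F, hexpF, ⟨x, intrinsicInterior_subset hxi, hxQH.2⟩, part2 x hx F hexpF hxi⟩
end

section
/- Let Q be a polytope and H an affine hyperplane containing no vertex of Q. If F and G are faces of Q that both meet H and satisfy F ∩ H = G ∩ H, then F = G. -/
open Set Classical

theorem extreme_exposed {N : ℕ} {S : Set (Pt N)} (hS : S.Finite)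
    {v : Pt N} (hv : v ∈ (convexHull ℝ S).extremePoints ℝ) :
    IsExposed ℝ (convexHull ℝ S) {v} := by
  have hvS : v ∈ S := extremePoints_convexHull_subset hv
  have hv' : v ∉ convexHull ℝ (S \ {v}) := by
    intro h
    have h2 : v ∈ (convexHull ℝ (S \ {v})).extremePoints ℝ :=
      inter_extremePoints_subset_extremePoints_of_subset
        (convexHull_mono diff_subset) ⟨h, hv⟩
    have := extremePoints_convexHull_subset h2
    exact this.2 rfl
  have hclosed : IsClosed (convexHull ℝ (S \ {v})) :=
    ((hS.subset diff_subset).isCompact_convexHull ℝ).isClosed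
  obtain ⟨g, u, hgu, hgv⟩ :=
    geometric_hahn_banach_closed_point (convex_convexHull ℝ _) hclosed hv'
  intro _
  refine ⟨g, ?_⟩
  have hmax : ∀ y ∈ convexHull ℝ S, g y ≤ g v := by
    intro y hy
    have : convexHull ℝ S ⊆ {y | g y ≤ g v} := by
      apply convexHull_min _ (convex_halfSpace_le (LinearMap.isLinear (g : Pt N →ₗ[ℝ] ℝ)) (g v))
      intro s hs
      show g s ≤ g v
      rcases eq_or_ne s v with rfl | hne
      · exact le_refl _
      · exact le_of_lt ((hgu s (subset_convexHull ℝ _ ⟨hs, hne⟩)).trans hgv)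
    exact this hy
  apply Subset.antisymm
  · rintro x rfl
    exact ⟨subset_convexHull ℝ _ hvS, hmax⟩
  · rintro x ⟨hxQ, hx⟩
    have hgx : g x = g v := le_antisymm (hmax x hxQ) (hx v (subset_convexHull ℝ _ hvS))
    rcases (S \ {v}).eq_empty_or_nonempty with he | hne
    · have hSv : S = {v} := by
        apply Subset.antisymm _ (by simpa using hvS)
        intro s hs
        by_contra hsv
        have hmem : s ∈ S \ {v} := ⟨hs, hsv⟩
        rw [he] at hmem
        exact hmem
      rw [hSv, convexHull_singleton] at hxQ
      exact hxQ
    · have hSi : S = insert v (S \ {v}) := by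
        rw [Set.insert_diff_singleton, Set.insert_eq_self.2 hvS]
      rw [hSi, convexHull_insert hne] at hxQ
      obtain ⟨v', hv'', y, hy, hxseg⟩ := mem_convexJoin.1 hxQ
      rw [mem_singleton_iff] at hv''
      obtain ⟨a, b, ha, hb, hab, hxeq⟩ := hxseg
      rw [hv''] at hxeq
      rcases eq_or_lt_of_le hb with hb0 | hb0
      · have ha1 : a = 1 := by linarith
        have hxv : x = v := by rw [← hxeq, ha1, ← hb0]; simp
        exact hxv ▸ rfl
      · exfalso
        have hgy : g y < g v := (hgu y hy).trans hgv
        have hlt : g x < g v := by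
          rw [← hxeq, map_add, map_smul, map_smul]
          calc a • g v + b • g y < a • g v + b • g v := by
                simpa using (mul_lt_mul_of_pos_left hgy hb0)
            _ = g v := by rw [smul_eq_mul, smul_eq_mul, ← add_mul, hab, one_mul]
        rw [hgx] at hlt
        exact lt_irrefl _ hlt

theorem faceDim_singleton {N : ℕ} (v : Pt N) : faceDim ({v} : Set (Pt N)) = 0 := by
  rw [faceDim, if_neg (Set.singleton_nonempty v).ne_empty, direction_affineSpan,
    vectorSpan_singleton]
  simp

theorem exists_neg_side {N : ℕ} {S : Set (Pt N)} (hS : S.Finite) {F : Set (Pt N)}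
    (hF : IsExposed ℝ (convexHull ℝ S) F) (f : Pt N →ᵃ[ℝ] ℝ)
    (hv : ∀ v : Pt N, IsVertexOf (convexHull ℝ S) v → f v ≠ 0)
    (hne : ∃ p ∈ F, f p = 0) : ∃ y ∈ F, f y < 0 := by
  by_contra hcon
  push_neg at hcon
  obtain ⟨p, hpF, hpf⟩ := hne
  set Q := convexHull ℝ S with hQdef
  have hQcomp : IsCompact Q := hS.isCompact_convexHull ℝ
  set l : Pt N →L[ℝ] ℝ := LinearMap.toContinuousLinearMap f.linear with hl
  have hlf : ∀ x y : Pt N, f x ≤ f y ↔ l x ≤ l y := by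
    intro x y
    have hx : f.linear x + f 0 = f x := by
      have := f.map_vadd 0 x; simpa using this.symm
    have hy : f.linear y + f 0 = f y := by
      have := f.map_vadd 0 y; simpa using this.symm
    simp only [hl, LinearMap.coe_toContinuousLinearMap']
    rw [← hx, ← hy]
    constructor <;> intro h <;> linarith
  set E := (-l).toExposed F with hE
  have hEexp : IsExposed ℝ F E := ContinuousLinearMap.toExposed.isExposed
  have hEeq : E = {x ∈ F | f x = 0} := by
    ext x
    simp only [hE, ContinuousLinearMap.toExposed, mem_setOf_eq,
      ContinuousLinearMap.neg_apply, neg_le_neg_iff]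
    constructor
    · rintro ⟨hxF, hmin⟩
      refine ⟨hxF, le_antisymm ?_ (hcon x hxF)⟩
      rw [← hpf]
      exact (hlf x p).2 (hmin p hpF)
    · rintro ⟨hxF, hx0⟩
      refine ⟨hxF, fun y hy => ?_⟩
      exact (hlf x y).1 (hx0 ▸ hcon y hy)
  have hEne : E.Nonempty := ⟨p, by rw [hEeq]; exact ⟨hpF, hpf⟩⟩
  have hFcomp : IsCompact F := hF.isCompact hQcomp
  have hEcomp : IsCompact E := hEexp.isCompact hFcomp
  have hEex : IsExtreme ℝ Q E := hF.isExtreme.trans hEexp.isExtreme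
  obtain ⟨v, hvE⟩ := hEcomp.extremePoints_nonempty hEne
  have hvQ : v ∈ Q.extremePoints ℝ := hEex.extremePoints_subset_extremePoints hvE
  have hvert : IsVertexOf Q v := ⟨extreme_exposed hS hvQ, faceDim_singleton v⟩
  have : f v = 0 := by
    have := hvE.1
    rw [hEeq] at this
    exact this.2
  exact hv v hvert this

theorem cross_zero {N : ℕ} (f : Pt N →ᵃ[ℝ] ℝ) {x y : Pt N}
    (hx : 0 < f x) (hy : f y < 0) : ∃ z ∈ openSegment ℝ x y, f z = 0 := by
  have hd : 0 < f x - f y := by linarith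
  have hab : -f y / (f x - f y) + f x / (f x - f y) = 1 := by
    field_simp
    ring
  refine ⟨(-f y / (f x - f y)) • x + (f x / (f x - f y)) • y, ?_, ?_⟩
  · exact ⟨-f y / (f x - f y), f x / (f x - f y), div_pos (by linarith) hd,
      div_pos hx hd, hab, rfl⟩
  · rw [Convex.combo_affine_apply hab]
    rw [smul_eq_mul, smul_eq_mul]
    field_simp
    ring

/-- If `H` is a hyperplane containing no vertex of the polytope
`Q`, and `F`, `G` are faces of `Q` meeting `H` with `F ∩ H = G ∩ H`, then
`F = G`. -/
theorem face_inter_hyperplane_injective {N : ℕ} (Q H F G : Set (Pt N))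
    (hQ : IsPolytope Q) (hH : IsHyperplane H)
    (hv : ∀ v : Pt N, IsVertexOf Q v → v ∉ H)
    (hF : IsFaceOf Q F) (hG : IsFaceOf Q G)
    (hFH : (F ∩ H).Nonempty) (hGH : (G ∩ H).Nonempty)
    (hEq : F ∩ H = G ∩ H) : F = G := by
  obtain ⟨S, hS, rfl⟩ := hQ
  obtain ⟨f, hflin, rfl⟩ := hH
  have key : ∀ F G : Set (Pt N), IsFaceOf (convexHull ℝ S) F →
      IsFaceOf (convexHull ℝ S) G → (F ∩ {x | f x = 0}).Nonempty →
      F ∩ {x | f x = 0} = G ∩ {x | f x = 0} → F ⊆ G := by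
    intro F G hF hG hFH hEq x hx
    obtain ⟨p, hpF, hpf⟩ := hFH
    have hpf : f p = 0 := hpf
    have hFconv : Convex ℝ F := hF.convex (convex_convexHull ℝ S)
    have hvf : ∀ v : Pt N, IsVertexOf (convexHull ℝ S) v → f v ≠ 0 := fun v h => hv v h
    rcases lt_trichotomy (f x) 0 with hfx | hfx | hfx
    · have hvf' : ∀ v : Pt N, IsVertexOf (convexHull ℝ S) v → (-f) v ≠ 0 := by
        intro v h
        simpa using hvf v h
      obtain ⟨y, hyF, hyf⟩ := exists_neg_side hS hF (-f) hvf' ⟨p, hpF, by simpa using hpf⟩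
      have hyf' : 0 < f y := by
        have : -(f y) < 0 := by simpa using hyf
        linarith
      obtain ⟨z, hzseg, hzf⟩ := cross_zero f hyf' hfx
      have hzF : z ∈ F := hFconv.segment_subset hyF hx (openSegment_subset_segment ℝ y x hzseg)
      have hzG : z ∈ G := by
        have : z ∈ G ∩ {x | f x = 0} := hEq ▸ ⟨hzF, hzf⟩
        exact this.1
      exact hG.isExtreme.right_mem_of_mem_openSegment (hF.subset hyF) (hF.subset hx) hzG hzseg
    · have : x ∈ F ∩ {x | f x = 0} := ⟨hx, hfx⟩
      rw [hEq] at this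
      exact this.1
    · obtain ⟨y, hyF, hyf⟩ := exists_neg_side hS hF f hvf ⟨p, hpF, hpf⟩
      obtain ⟨z, hzseg, hzf⟩ := cross_zero f hfx hyf
      have hzF : z ∈ F := hFconv.segment_subset hx hyF (openSegment_subset_segment ℝ x y hzseg)
      have hzG : z ∈ G := by
        have : z ∈ G ∩ {x | f x = 0} := hEq ▸ ⟨hzF, hzf⟩
        exact this.1
      exact hG.isExtreme.2 (hF.subset hx) (hF.subset hyF) hzG hzseg
  exact Subset.antisymm (key F G hF hG hFH hEq) (key G F hG hF hGH hEq.symm)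
end
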